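/- arXiv:2105.11786 — 2 statements merged into one kernel-verified Lean document; each statement's English description precedes it below -/
import Mathlib

section
/- Let M be an FSM and V ⊆ Σ_I* a finite set of input traces containing the empty trace ε. Then either the set of states q0-after-V contains all reachable states of M (q0-after-V = q0-after-Σ_I*), or q0-after-(V ∪ V.Σ_I) contains at least one state not contained in q0-after-V, i.e., q0-after-V ⊊ q0-after-(V ∪ V.Σ_I). -/
/-- State reached from `q` by an input trace. -/
def dAfter {Q I : Type*} (δ : Q → I → Q) : Q → List I → Q
  | q, [] => q
  | q, x :: xs => dAfter δ (δ q x) xs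

lemma dAfter_append {Q I : Type*} (δ : Q → I → Q) (q : Q) (u v : List I) :
    dAfter δ q (u ++ v) = dAfter δ (dAfter δ q u) v := by
  induction u generalizing q with
  | nil => rfl
  | cons x xs ih => simp [dAfter, ih]

/-- for a finite set V of input traces containing ε, either q0-after-V contains
all reachable states, or q0-after-(V ∪ V.Σ_I) properly contains q0-after-V. -/
theorem stmt_3 {Q I : Type*} (δ : Q → I → Q) (q0 : Q)
    (V : Set (List I)) (hfin : V.Finite) (hε : ([] : List I) ∈ V) :
    ((fun v => dAfter δ q0 v) '' V = Set.range fun v => dAfter δ q0 v) ∨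
    ((fun v => dAfter δ q0 v) '' V ⊂
      (fun v => dAfter δ q0 v) '' (V ∪ {w | ∃ v ∈ V, ∃ x : I, w = v ++ [x]})) := by
  set f : List I → Q := fun v => dAfter δ q0 v with hf
  by_cases h : f '' (V ∪ {w | ∃ v ∈ V, ∃ x : I, w = v ++ [x]}) ⊆ f '' V
  · left
    apply Set.eq_of_subset_of_subset (Set.image_subset_range _ _)
    rintro q ⟨v, rfl⟩
    induction v using List.reverseRecOn with
    | nil => exact ⟨[], hε, rfl⟩
    | append_singleton v x ih =>
      obtain ⟨u, hu, huv⟩ := ih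
      have : f (u ++ [x]) ∈ f '' V := h ⟨u ++ [x], Or.inr ⟨u, hu, x, rfl⟩, rfl⟩
      have he : f (u ++ [x]) = f (v ++ [x]) := by
        simp only [hf, dAfter_append]; simp only [hf] at huv; rw [huv]
      rwa [he] at this
  · right
    exact ⟨Set.image_mono Set.subset_union_left, fun hsub => h (hsub.trans le_rfl)⟩
end

section
/- Let M1' be the nondeterministic requirement abstraction of M for composite requirement R = ⋀_{i=1}^k R(q_i,x_i,Z_i), and let Π̄ = ⋃_{i=1}^k Π(q_i).{x_i}. For a completely specified DFSM S and any single input sequence x̄, S passes x̄ against M1' (i.e., ω_S(s0,x̄) ∈ ω_{M1'}(q0,x̄)) if and only if S passes every trace in pref(x̄) ∩ Π̄ against M1'. -/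
def oOut {Q I O : Type*} (δ : Q → I → Q) (ω : Q → I → O) : Q → List I → List O
  | _, [] => []
  | q, x :: xs => ω q x :: oOut δ ω (δ q x) xs

/-- Admissible output set of M1' at (q,x): Z_i at requirement pairs, Σ_O elsewhere. -/
def reqOut {Q I O : Type*} {k : ℕ} (qr : Fin k → Q) (xr : Fin k → I)
    (Zr : Fin k → Set O) (q : Q) (x : I) : Set O :=
  {y | ∀ i, qr i = q → xr i = x → y ∈ Zr i}

/-- S passes input trace xs against M1': the output trace of S is pointwise contained in
the sequence of admissible output sets of M1' (i.e. ω_S(s0,xs) ∈ ω_{M1'}(q0,xs)). -/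
def passes {Q S I O : Type*} {k : ℕ}
    (δM : Q → I → Q) (q0 : Q) (qr : Fin k → Q) (xr : Fin k → I) (Zr : Fin k → Set O)
    (δS : S → I → S) (ωS : S → I → O) (s0 : S) (xs : List I) : Prop :=
  List.Forall₂ (fun (y : O) (z : Set O) => y ∈ z)
    (oOut δS ωS s0 xs) (oOut δM (reqOut qr xr Zr) q0 xs)

lemma oOut_append {Q I O : Type*} (δ : Q → I → Q) (ω : Q → I → O) :
    ∀ (a b : List I) (q : Q),
    oOut δ ω q (a ++ b) = oOut δ ω q a ++ oOut δ ω (dAfter δ q a) b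
  | [], b, q => rfl
  | x :: xs, b, q => by simp [oOut, dAfter, oOut_append δ ω xs b]

lemma passes_prefix {Q S I O : Type*} {k : ℕ}
    (δM : Q → I → Q) (qr : Fin k → Q) (xr : Fin k → I) (Zr : Fin k → Set O)
    (δS : S → I → S) (ωS : S → I → O) :
    ∀ (w t : List I) (q0 : Q) (s0 : S),
    passes δM q0 qr xr Zr δS ωS s0 (w ++ t) → passes δM q0 qr xr Zr δS ωS s0 w
  | [], t, q0, s0, _ => List.Forall₂.nil
  | x :: xs, t, q0, s0, h => by
      simp only [passes, oOut, List.cons_append] at h ⊢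
      rcases h with _ | ⟨h1, h2⟩
      exact List.Forall₂.cons h1 (passes_prefix δM qr xr Zr δS ωS xs t _ _ h2)

lemma passes_concat {Q S I O : Type*} {k : ℕ}
    (δM : Q → I → Q) (q0 : Q) (qr : Fin k → Q) (xr : Fin k → I) (Zr : Fin k → Set O)
    (δS : S → I → S) (ωS : S → I → O) (s0 : S) (π : List I) (a : I) :
    passes δM q0 qr xr Zr δS ωS s0 (π ++ [a]) ↔
      passes δM q0 qr xr Zr δS ωS s0 π ∧
        ωS (dAfter δS s0 π) a ∈ reqOut qr xr Zr (dAfter δM q0 π) a := by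
  induction π generalizing q0 s0 with
  | nil => simp [passes, oOut, dAfter, List.forall₂_cons]
  | cons x xs ih =>
      simp [passes, oOut, dAfter, List.forall₂_cons, ih, and_assoc]
      exact fun _ => ih (δM q0 x) (δS s0 x)

/-- S passes a single input sequence xs against M1' iff S passes every
nonempty prefix of xs lying in Π̄ = ⋃_i Π(q_i).{x_i}. -/
theorem stmt_14 {Q S I O : Type*}
    (δM : Q → I → Q) (ωM : Q → I → O) (q0 : Q)
    (k : ℕ) (qr : Fin k → Q) (xr : Fin k → I) (Zr : Fin k → Set O)
    (hZ : ∀ i, ωM (qr i) (xr i) ∈ Zr i)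
    (δS : S → I → S) (ωS : S → I → O) (s0 : S)
    (xs : List I) :
    passes δM q0 qr xr Zr δS ωS s0 xs ↔
    (∀ w : List I, w ≠ [] → w <+: xs →
      (∃ (i : Fin k) (π : List I), dAfter δM q0 π = qr i ∧ w = π ++ [xr i]) →
      passes δM q0 qr xr Zr δS ωS s0 w) := by
  constructor
  · rintro h w _ ⟨t, rfl⟩ _
    exact passes_prefix δM qr xr Zr δS ωS w t q0 s0 h
  · induction xs using List.reverseRecOn with
    | nil => intro _; exact List.Forall₂.nil
    | append_singleton ys a ih =>
      intro H
      rw [passes_concat]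
      refine ⟨ih (fun w hw hpre hPi => H w hw (hpre.trans (ys.prefix_append [a])) hPi), ?_⟩
      intro i hq hx
      have hp : passes δM q0 qr xr Zr δS ωS s0 (ys ++ [a]) := by
        refine H (ys ++ [a]) (by simp) (List.prefix_refl _) ⟨i, ys, hq.symm, by rw [hx]⟩
      exact ((passes_concat δM q0 qr xr Zr δS ωS s0 ys a).mp hp).2 i hq hx
end
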